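/- Riedel–Sahoo theorem: If f : ℝ → ℝ is differentiable at every point of the closed interval [a,b] (with a < b), then there exists a point η ∈ (a,b) such that (f(η) - f(a))/(η - a) = f'(η) - ((f'(b) - f'(a))/(b - a)) · (η - a)/2. -/

import Mathlib

open Set Topology Filter

/-- Flett's theorem with `G' a = G' b = 0`. -/
lemma flett_zero (G G' : ℝ → ℝ) (a b : ℝ) (hab : a < b)
    (hG : ∀ x ∈ Icc a b, HasDerivWithinAt G (G' x) (Icc a b) x)
    (ha0 : G' a = 0) (hb0 : G' b = 0) :
    ∃ η ∈ Ioo a b, G η - G a = (η - a) * G' η := by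
  set s := Icc a b with hs
  set φ : ℝ → ℝ := fun y => (G y - G a) / (y - a) with hφ
  set D : ℝ → ℝ := fun x => (G' x * (x - a) - (G x - G a)) / (x - a) ^ 2 with hD
  have has : a ∈ s := left_mem_Icc.2 hab.le
  have hbs : b ∈ s := right_mem_Icc.2 hab.le
  have hφa : φ a = 0 := by simp [hφ]
  have hφeq : φ = slope G a := by
    funext y; rw [slope_def_field]
  have hφc : ContinuousOn φ s := by
    intro x hx
    by_cases hxa : x = a
    · subst hxa
      rw [← continuousWithinAt_diff_self]
      have := (hG x hx)
      rw [hasDerivWithinAt_iff_tendsto_slope] at this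
      rw [ContinuousWithinAt, hφa, ← ha0, hφeq]
      exact this
    · have hGc : ContinuousWithinAt G s x := (hG x hx).continuousWithinAt
      exact ((hGc.sub continuousWithinAt_const).div
        ((continuousWithinAt_id).sub continuousWithinAt_const) (sub_ne_zero.2 hxa))
  have hφd : ∀ x ∈ s, x ≠ a → HasDerivWithinAt φ (D x) s x := by
    intro x hx hxa
    have h1 : HasDerivWithinAt (fun y => G y - G a) (G' x) s x := (hG x hx).sub_const _
    have h2 : HasDerivWithinAt (fun y : ℝ => y - a) 1 s x :=
      (hasDerivWithinAt_id x s).sub_const a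
    have := h1.fun_div h2 (sub_ne_zero.2 hxa)
    simpa [hD, hφ] using this
  have hφd' : ∀ x ∈ Ioo a b, HasDerivAt φ (D x) x := by
    intro x hx
    exact (hφd x (Ioo_subset_Icc_self hx) (ne_of_gt hx.1)).hasDerivAt
      (Icc_mem_nhds hx.1 hx.2)
  have key : ∀ η ∈ Ioo a b, D η = 0 → G η - G a = (η - a) * G' η := by
    intro η hη hDη
    have hηa : η - a ≠ 0 := sub_ne_zero.2 (ne_of_gt hη.1)
    rw [hD] at hDη
    have := (div_eq_zero_iff.1 hDη).resolve_right (pow_ne_zero 2 hηa)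
    linarith
  -- the derivative of φ at b
  have hDb : D b = -(G b - G a) / (b - a) ^ 2 := by
    simp [hD, hb0]
  have hneb : (𝓝[s \ {b}] b).NeBot := by
    have hsub : Ico a b ⊆ s \ {b} := fun x hx => ⟨Ico_subset_Icc_self hx, ne_of_lt hx.2⟩
    have : b ∈ closure (Ico a b) := by
      rw [closure_Ico hab.ne]; exact right_mem_Icc.2 hab.le
    exact mem_closure_iff_nhdsWithin_neBot.1 (closure_mono hsub this)
  -- if φ b > 0 then b is not a max; if φ b < 0 then b is not a min
  have hslope : ∀ x ∈ s \ {b}, slope φ b x = (φ x - φ b) / (x - b) := by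
    intro x hx; rw [slope_def_field]
  have not_max : 0 < φ b → ∃ x ∈ s, φ b < φ x := by
    intro hpos
    have hGba : 0 < G b - G a := by
      have h := mul_pos hpos (sub_pos.2 hab)
      simp only [hφ] at h
      rwa [div_mul_cancel₀ _ (sub_ne_zero.2 hab.ne')] at h
    have hDbneg : D b < 0 := by
      rw [hDb]
      apply div_neg_of_neg_of_pos (by linarith) (pow_pos (sub_pos.2 hab) 2)
    have hd := hφd b hbs (ne_of_gt hab)
    rw [hasDerivWithinAt_iff_tendsto_slope] at hd
    have hev : ∀ᶠ x in 𝓝[s \ {b}] b, slope φ b x < 0 :=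
      hd.eventually_lt_const hDbneg
    obtain ⟨x, hx, hxlt⟩ := (hev.and (eventually_mem_nhdsWithin)).exists
    refine ⟨x, hxlt.1, ?_⟩
    rw [hslope x hxlt] at hx
    have hxb : x < b := lt_of_le_of_ne hxlt.1.2 hxlt.2
    rcases div_neg_iff.1 hx with h | h
    · linarith [h.1]
    · linarith [h.2]
  have not_min : φ b < 0 → ∃ x ∈ s, φ x < φ b := by
    intro hneg
    have hGba : G b - G a < 0 := by
      have h := mul_neg_of_neg_of_pos hneg (sub_pos.2 hab)
      simp only [hφ] at h
      rwa [div_mul_cancel₀ _ (sub_ne_zero.2 hab.ne')] at h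
    have hDbpos : 0 < D b := by
      rw [hDb]
      apply div_pos (by linarith) (pow_pos (sub_pos.2 hab) 2)
    have hd := hφd b hbs (ne_of_gt hab)
    rw [hasDerivWithinAt_iff_tendsto_slope] at hd
    have hev : ∀ᶠ x in 𝓝[s \ {b}] b, 0 < slope φ b x :=
      hd.eventually_const_lt hDbpos
    obtain ⟨x, hx, hxlt⟩ := (hev.and (eventually_mem_nhdsWithin)).exists
    refine ⟨x, hxlt.1, ?_⟩
    rw [hslope x hxlt] at hx
    have hxb : x < b := lt_of_le_of_ne hxlt.1.2 hxlt.2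
    rcases div_pos_iff.1 hx with h | h
    · linarith [h.2]
    · linarith [h.1]
  rcases lt_trichotomy (φ b) 0 with hb1 | hb1 | hb1
  · -- min argument
    obtain ⟨x₀, hx₀s, hmin⟩ := isCompact_Icc.exists_isMinOn ⟨a, has⟩ hφc
    have hx₀a : x₀ ≠ a := by
      intro h
      have h1 := hmin hbs
      rw [h, hφa] at h1
      simp only [Set.mem_setOf_eq] at h1
      linarith
    have hx₀b : x₀ ≠ b := by
      intro h
      obtain ⟨x, hxs, hxlt⟩ := not_min hb1
      have h1 := hmin hxs
      rw [h] at h1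
      simp only [Set.mem_setOf_eq] at h1
      linarith
    have hx₀ : x₀ ∈ Ioo a b :=
      ⟨lt_of_le_of_ne hx₀s.1 (Ne.symm hx₀a), lt_of_le_of_ne hx₀s.2 hx₀b⟩
    have hloc : IsLocalMin φ x₀ := hmin.isLocalMin (Icc_mem_nhds hx₀.1 hx₀.2)
    exact ⟨x₀, hx₀, key x₀ hx₀ (hloc.hasDerivAt_eq_zero (hφd' x₀ hx₀))⟩
  · -- Rolle on φ
    obtain ⟨η, hη, hDη⟩ := exists_hasDerivAt_eq_zero hab hφc (by rw [hφa, hb1]) hφd'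
    exact ⟨η, hη, key η hη hDη⟩
  · -- max argument
    obtain ⟨x₀, hx₀s, hmax⟩ := isCompact_Icc.exists_isMaxOn ⟨a, has⟩ hφc
    have hx₀a : x₀ ≠ a := by
      intro h
      have h1 := hmax hbs
      rw [h, hφa] at h1
      simp only [Set.mem_setOf_eq] at h1
      linarith
    have hx₀b : x₀ ≠ b := by
      intro h
      obtain ⟨x, hxs, hxlt⟩ := not_max hb1
      have h1 := hmax hxs
      rw [h] at h1
      simp only [Set.mem_setOf_eq] at h1
      linarith
    have hx₀ : x₀ ∈ Ioo a b :=
      ⟨lt_of_le_of_ne hx₀s.1 (Ne.symm hx₀a), lt_of_le_of_ne hx₀s.2 hx₀b⟩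
    have hloc : IsLocalMax φ x₀ := hmax.isLocalMax (Icc_mem_nhds hx₀.1 hx₀.2)
    exact ⟨x₀, hx₀, key x₀ hx₀ (hloc.hasDerivAt_eq_zero (hφd' x₀ hx₀))⟩

/-- **Riedel–Sahoo theorem.** If `f` is differentiable at every point of the closed
interval `[a,b]` (one-sidedly at the endpoints), with derivative `f'`, then there exists
`η ∈ (a,b)` with `(f(η) - f(a))/(η - a) = f'(η) - ((f'(b) - f'(a))/(b - a)) · (η - a)/2`. -/
theorem riedel_sahoo_theorem (f f' : ℝ → ℝ) (a b : ℝ) (hab : a < b)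
    (hf : ∀ x ∈ Set.Icc a b, HasDerivWithinAt f (f' x) (Set.Icc a b) x) :
    ∃ η ∈ Set.Ioo a b,
      (f η - f a) / (η - a) = f' η - (f' b - f' a) / (b - a) * ((η - a) / 2) := by
  set k : ℝ := (f' b - f' a) / (b - a) with hk
  set c : ℝ := f' a - k * a with hc
  have hba : b - a ≠ 0 := sub_ne_zero.2 hab.ne'
  have hkba : k * (b - a) = f' b - f' a := div_mul_cancel₀ _ hba
  set G : ℝ → ℝ := fun x => f x - (k * x ^ 2 / 2 + c * x) with hG
  set G' : ℝ → ℝ := fun x => f' x - (k * x + c) with hG'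
  have hGd : ∀ x ∈ Set.Icc a b, HasDerivWithinAt G (G' x) (Set.Icc a b) x := by
    intro x hx
    have hq : HasDerivAt (fun y : ℝ => k * y ^ 2 / 2 + c * y) (k * x + c) x := by
      have h1 := (((hasDerivAt_pow 2 x).const_mul k).div_const 2).fun_add
        ((hasDerivAt_id x).const_mul c)
      refine h1.congr_deriv ?_
      ring
    exact (hf x hx).sub (hq.hasDerivWithinAt)
  have ha0 : G' a = 0 := by simp [hG', hc]
  have hb0 : G' b = 0 := by
    simp only [hG', hc]
    nlinarith [hkba]
  obtain ⟨η, hη, hflett⟩ := flett_zero G G' a b hab hGd ha0 hb0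
  refine ⟨η, hη, ?_⟩
  have hηa : η - a ≠ 0 := sub_ne_zero.2 (ne_of_gt hη.1)
  rw [div_eq_iff hηa]
  simp only [hG, hG'] at hflett
  linear_combination hflett
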